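/- Assume H is connected and ∑_{v∈V} s_v = 0. Then the feasible set {η∈𝓨 : Bη = s} is nonempty, the dual objective 𝓓 attains its minimum over this set, the Poisson objective 𝓟 attains its minimum over 𝓧₀, and strong duality holds in the form min_{x∈𝓧₀} 𝓟(x) = − min{ 𝓓(η) : η∈𝓨, Bη = s }. -/

import Mathlib

set_option linter.unusedSectionVars false


open Finset

section

variable {V : Type*} [Fintype V] [DecidableEq V] [Nonempty V]
variable {E : Type*} [Fintype E]

/-- The edge range `R_e(x) = max_{u∈e} x_u - min_{v∈e} x_v`. -/
noncomputable def eRange (edge : E → Finset V) (hne : ∀ e, (edge e).Nonempty)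
    (x : V → ℝ) (e : E) : ℝ :=
  (edge e).sup' (hne e) x - (edge e).inf' (hne e) x

/-- The ℓ¹ norm on ℝ^V. -/
def l1norm (η : V → ℝ) : ℝ := ∑ v, |η v|

/-- Membership in `U_e`: supported on `e` and zero-sum. -/
def memUe (edge : E → Finset V) (e : E) (η : V → ℝ) : Prop :=
  (∀ v, v ∉ edge e → η v = 0) ∧ ∑ v, η v = 0

/-- Membership in `𝓨 = ∏_e U_e`. -/
def memY (edge : E → Finset V) (η : E → V → ℝ) : Prop := ∀ e, memUe edge e (η e)

/-- The aggregation map `Bη = ∑_e η_e`. -/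
def Bmap (η : E → V → ℝ) : V → ℝ := fun v => ∑ e, η e v

/-- The dual objective `𝓓(η) = ∑_e ‖η_e‖₁²/(8 w_e)`. -/
noncomputable def Dobj (w : E → ℝ) (η : E → V → ℝ) : ℝ :=
  ∑ e, (l1norm (η e)) ^ 2 / (8 * w e)

/-- Weighted degree `d_v = ∑_{e ∋ v} w_e`. -/
noncomputable def degw (edge : E → Finset V) (w : E → ℝ) (v : V) : ℝ :=
  ∑ e ∈ univ.filter (fun e => v ∈ edge e), w e

/-- Membership in `𝓧₀`: weighted zero-mean. -/
def memX0 (edge : E → Finset V) (w : E → ℝ) (x : V → ℝ) : Prop :=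
  ∑ v, degw edge w v * x v = 0

/-- The energy `𝓔_H(x)`. -/
noncomputable def energyH (edge : E → Finset V) (hne : ∀ e, (edge e).Nonempty)
    (w : E → ℝ) (x : V → ℝ) : ℝ :=
  (1 / 2) * ∑ e, w e * (eRange edge hne x e) ^ 2

/-- The Poisson objective `𝓟(x) = 𝓔_H(x) - ⟨s,x⟩`. -/
noncomputable def Pobj (edge : E → Finset V) (hne : ∀ e, (edge e).Nonempty)
    (w : E → ℝ) (s : V → ℝ) (x : V → ℝ) : ℝ :=
  energyH edge hne w x - ∑ v, s v * x v

/-- Connectivity of the hypergraph. -/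
def HConn (edge : E → Finset V) : Prop :=
  ∀ u v : V, ∃ (k : ℕ) (p : Fin (k + 1) → V) (c : Fin k → E),
    p 0 = u ∧ p (Fin.last k) = v ∧
    ∀ i : Fin k, p i.castSucc ∈ edge (c i) ∧ p i.succ ∈ edge (c i)


-- basic lemmas
variable {edge : E → Finset V} {hne : ∀ e, (edge e).Nonempty} {w : E → ℝ}

lemma aux_eRange_nonneg (x : V → ℝ) (e : E) : 0 ≤ eRange edge hne x e :=
  by
  obtain ⟨u, hu⟩ := hne e
  exact sub_nonneg.2 ((Finset.inf'_le x hu).trans (Finset.le_sup' x hu))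

lemma aux_eRange_continuous (e : E) : Continuous (fun x : V → ℝ => eRange edge hne x e) := by
  unfold eRange
  exact (Continuous.finset_sup'_apply (hne e) fun i _ => continuous_apply i).sub
    (Continuous.finset_inf'_apply (hne e) fun i _ => continuous_apply i)

lemma aux_energy_continuous : Continuous (fun x : V → ℝ => energyH edge hne w x) := by
  unfold energyH
  exact continuous_const.mul <| continuous_finset_sum _ fun e _ =>
    continuous_const.mul ((aux_eRange_continuous e).pow 2)

lemma aux_Pobj_continuous (s : V → ℝ) :
    Continuous (fun x : V → ℝ => Pobj edge hne w s x) := by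
  unfold Pobj
  exact aux_energy_continuous.sub
    (continuous_finset_sum _ fun v _ => continuous_const.mul (continuous_apply v))

lemma aux_energy_nonneg (hw : ∀ e, 0 < w e) (x : V → ℝ) : 0 ≤ energyH edge hne w x := by
  unfold energyH
  apply mul_nonneg (by norm_num)
  exact Finset.sum_nonneg fun e _ => mul_nonneg (hw e).le (sq_nonneg _)

lemma aux_sup'_mul {c : ℝ} (hc : 0 ≤ c) (x : V → ℝ) (e : E) :
    (edge e).sup' (hne e) (fun u => c * x u) = c * (edge e).sup' (hne e) x := by
  apply le_antisymm
  · exact Finset.sup'_le _ _ fun u hu =>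
      mul_le_mul_of_nonneg_left (Finset.le_sup' x hu) hc
  · obtain ⟨u, hu, hux⟩ := Finset.exists_mem_eq_sup' (hne e) x
    rw [hux]
    exact Finset.le_sup' (fun u => c * x u) hu

lemma aux_inf'_mul {c : ℝ} (hc : 0 ≤ c) (x : V → ℝ) (e : E) :
    (edge e).inf' (hne e) (fun u => c * x u) = c * (edge e).inf' (hne e) x := by
  apply le_antisymm
  · obtain ⟨u, hu, hux⟩ := Finset.exists_mem_eq_inf' (hne e) x
    rw [hux]
    exact Finset.inf'_le (fun u => c * x u) hu
  · exact Finset.le_inf' _ _ fun u hu =>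
      mul_le_mul_of_nonneg_left (Finset.inf'_le x hu) hc

lemma aux_eRange_smul {c : ℝ} (hc : 0 ≤ c) (x : V → ℝ) (e : E) :
    eRange edge hne (c • x) e = c * eRange edge hne x e := by
  unfold eRange
  have h1 : (edge e).sup' (hne e) (c • x) = c * (edge e).sup' (hne e) x := aux_sup'_mul hc x e
  have h2 : (edge e).inf' (hne e) (c • x) = c * (edge e).inf' (hne e) x := aux_inf'_mul hc x e
  rw [h1, h2]; ring

lemma aux_energy_smul {c : ℝ} (hc : 0 ≤ c) (x : V → ℝ) :
    energyH edge hne w (c • x) = c ^ 2 * energyH edge hne w x := by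
  unfold energyH
  simp only [Finset.mul_sum]
  refine Finset.sum_congr rfl fun e _ => ?_
  rw [aux_eRange_smul hc]
  ring

lemma aux_inner_le (e : E) (η : V → ℝ) (hη : memUe edge e η) (x : V → ℝ) :
    ∑ v, η v * x v ≤ l1norm η / 2 * eRange edge hne x e := by
  set M := (edge e).sup' (hne e) x with hM
  set m := (edge e).inf' (hne e) x with hm
  set c := (M + m) / 2 with hc
  have key : ∑ v, η v * x v = ∑ v, η v * (x v - c) := by
    simp only [mul_sub, Finset.sum_sub_distrib, ← Finset.sum_mul, hη.2, zero_mul, sub_zero]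
  rw [key]
  have hR : eRange edge hne x e = M - m := rfl
  calc ∑ v, η v * (x v - c) ≤ ∑ v, |η v| * ((M - m) / 2) := by
        refine Finset.sum_le_sum fun v _ => ?_
        by_cases hv : v ∈ edge e
        · have h1 : x v ≤ M := Finset.le_sup' x hv
          have h2 : m ≤ x v := Finset.inf'_le x hv
          have : |x v - c| ≤ (M - m) / 2 := by
            rw [abs_le]; constructor <;> [skip; skip] <;> simp only [hc] <;> linarith
          calc η v * (x v - c) ≤ |η v * (x v - c)| := le_abs_self _
            _ = |η v| * |x v - c| := abs_mul _ _
            _ ≤ |η v| * ((M - m) / 2) := mul_le_mul_of_nonneg_left this (abs_nonneg _)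
        · simp [hη.1 v hv]
      _ = l1norm η / 2 * eRange edge hne x e := by
        rw [← Finset.sum_mul, hR, l1norm]; ring

lemma aux_quad (we L R : ℝ) (hw : 0 < we) :
    -(L ^ 2 / (8 * we)) ≤ we / 2 * R ^ 2 - L / 2 * R := by
  have h := sq_nonneg (2 * we * R - L)
  rw [neg_le, le_div_iff₀ (by positivity : (0:ℝ) < 8 * we)]
  nlinarith

lemma aux_weak (hw : ∀ e, 0 < w e) (s : V → ℝ) (x : V → ℝ) (η : E → V → ℝ)
    (hη : memY edge η) (hB : Bmap η = s) :
    - Dobj w η ≤ Pobj edge hne w s x := by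
  have hsx : ∑ v, s v * x v = ∑ e, ∑ v, η e v * x v := by
    rw [← hB]
    simp only [Bmap, Finset.sum_mul]
    rw [Finset.sum_comm]
  unfold Pobj energyH Dobj
  rw [hsx, Finset.mul_sum, ← Finset.sum_sub_distrib, ← Finset.sum_neg_distrib]
  refine Finset.sum_le_sum fun e _ => ?_
  calc -(l1norm (η e) ^ 2 / (8 * w e))
      ≤ w e / 2 * eRange edge hne x e ^ 2 - l1norm (η e) / 2 * eRange edge hne x e :=
        aux_quad _ _ _ (hw e)
    _ ≤ 1 / 2 * (w e * eRange edge hne x e ^ 2) - ∑ v, η e v * x v := by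
        have := aux_inner_le (hne := hne) e (η e) (hη e) x
        linarith

lemma aux_const_of_energy_zero (hw : ∀ e, 0 < w e) (hconn : HConn edge) (x : V → ℝ)
    (hx : energyH edge hne w x = 0) (u v : V) : x u = x v := by
  have hrange : ∀ e, eRange edge hne x e = 0 := by
    intro e
    have h0 : ∑ e, w e * (eRange edge hne x e) ^ 2 = 0 := by
      unfold energyH at hx; linarith
    have := (Finset.sum_eq_zero_iff_of_nonneg
      (fun e _ => mul_nonneg (hw e).le (sq_nonneg _))).1 h0 e (Finset.mem_univ e)
    have h2 : (eRange edge hne x e) ^ 2 = 0 := by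
      rcases mul_eq_zero.1 this with h | h
      · exact absurd h (hw e).ne'
      · exact h
    exact (pow_eq_zero_iff two_ne_zero).1 h2
  have hedge : ∀ e, ∀ a ∈ edge e, ∀ b ∈ edge e, x a = x b := by
    intro e a ha b hb
    have h1 : x a ≤ (edge e).sup' (hne e) x := Finset.le_sup' x ha
    have h2 : (edge e).inf' (hne e) x ≤ x a := Finset.inf'_le x ha
    have h3 : x b ≤ (edge e).sup' (hne e) x := Finset.le_sup' x hb
    have h4 : (edge e).inf' (hne e) x ≤ x b := Finset.inf'_le x hb
    have h5 := hrange e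
    unfold eRange at h5
    linarith
  obtain ⟨k, p, c, hp0, hpl, hstep⟩ := hconn u v
  have key : ∀ n : ℕ, ∀ h : n < k + 1, x (p ⟨n, h⟩) = x u := by
    intro n
    induction n with
    | zero => intro h; rw [show (⟨0, h⟩ : Fin (k+1)) = 0 from rfl, hp0]
    | succ n ih =>
      intro h
      have hn : n < k := Nat.lt_of_succ_lt_succ h
      have hstep' := hstep ⟨n, hn⟩
      have e1 : (⟨n, hn⟩ : Fin k).castSucc = ⟨n, Nat.lt_of_lt_of_le hn (Nat.le_succ k)⟩ := rfl
      have e2 : (⟨n, hn⟩ : Fin k).succ = ⟨n + 1, h⟩ := rfl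
      rw [e1, e2] at hstep'
      rw [hedge (c ⟨n, hn⟩) _ hstep'.2 _ hstep'.1]
      exact ih _
  have := key k (Nat.lt_succ_self k)
  rw [show (⟨k, Nat.lt_succ_self k⟩ : Fin (k+1)) = Fin.last k from rfl, hpl] at this
  exact this.symm

lemma aux_degw_nonneg (hw : ∀ e, 0 < w e) (v : V) : 0 ≤ degw edge w v :=
  Finset.sum_nonneg fun e _ => (hw e).le

lemma aux_total_deg_pos [Nonempty E] (hne : ∀ e, (edge e).Nonempty) (hw : ∀ e, 0 < w e) :
    0 < ∑ v, degw edge w v := by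
  have key : ∑ v, degw edge w v = ∑ e, ((edge e).card : ℝ) * w e := by
    unfold degw
    simp only [Finset.sum_filter]
    rw [Finset.sum_comm]
    refine Finset.sum_congr rfl fun e _ => ?_
    rw [Finset.sum_ite_mem, Finset.univ_inter, Finset.sum_const, nsmul_eq_mul]
  rw [key]
  refine Finset.sum_pos (fun e _ => ?_) Finset.univ_nonempty
  have h1 : (0:ℝ) < ((edge e).card : ℝ) := by exact_mod_cast (hne e).card_pos
  exact mul_pos h1 (hw e)

lemma aux_coercive [Nonempty E] (hw : ∀ e, 0 < w e) (hconn : HConn edge) :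
    ∃ m : ℝ, 0 < m ∧ ∀ x : V → ℝ, memX0 edge w x → m * ‖x‖ ^ 2 ≤ energyH edge hne w x := by
  have hzero : ∀ x : V → ℝ, memX0 edge w x → energyH edge hne w x = 0 → x = 0 := by
    intro x hx hE
    obtain ⟨v0⟩ := ‹Nonempty V›
    have hconst : ∀ v, x v = x v0 := fun v => aux_const_of_energy_zero hw hconn x hE v v0
    have : ∑ v, degw edge w v * x v = (∑ v, degw edge w v) * x v0 := by
      rw [Finset.sum_mul]
      exact Finset.sum_congr rfl fun v _ => by rw [hconst v]
    rw [hx] at this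
    have hT := aux_total_deg_pos hne hw
    have hx0 : x v0 = 0 := by
      by_contra h
      exact absurd (mul_eq_zero.1 this.symm) (by push_neg; exact ⟨hT.ne', h⟩)
    funext v; rw [hconst v, hx0]; rfl
  have hX0scale : ∀ (c : ℝ) (x : V → ℝ), memX0 edge w x → memX0 edge w (c • x) := by
    intro c x hx
    unfold memX0 at *
    simp only [Pi.smul_apply, smul_eq_mul]
    rw [show ∑ v, degw edge w v * (c * x v) = c * ∑ v, degw edge w v * x v by
      rw [Finset.mul_sum]; exact Finset.sum_congr rfl fun v _ => by ring, hx, mul_zero]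
  by_cases hS : (Metric.sphere (0 : V → ℝ) 1 ∩ {x | memX0 edge w x}).Nonempty
  · obtain ⟨x0, hx0mem, hx0min⟩ := (((isCompact_sphere (0 : V → ℝ) 1).inter_right
      (by
        have : {x : V → ℝ | memX0 edge w x} = (fun x : V → ℝ => ∑ v, degw edge w v * x v) ⁻¹' {0} := rfl
        rw [this]
        exact IsClosed.preimage (continuous_finset_sum _ fun v _ =>
          continuous_const.mul (continuous_apply v)) isClosed_singleton))).exists_isMinOn hS
      (aux_energy_continuous (w := w)).continuousOn
    refine ⟨energyH edge hne w x0, ?_, ?_⟩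
    · rcases lt_or_eq_of_le (aux_energy_nonneg (hne := hne) hw x0) with h | h
      · exact h
      · exfalso
        have := hzero x0 hx0mem.2 h.symm
        have hn : ‖x0‖ = 1 := by simpa using hx0mem.1
        rw [this] at hn; simp at hn
    · intro x hx
      rcases eq_or_ne x 0 with rfl | hxne
      · simp only [norm_zero]
        rw [show (0:ℝ)^2 = 0 by ring, mul_zero]
        exact aux_energy_nonneg (hne := hne) hw 0
      · have hnx : (0:ℝ) < ‖x‖ := norm_pos_iff.2 hxne
        set y : V → ℝ := ‖x‖⁻¹ • x with hy
        have hymem : y ∈ Metric.sphere (0 : V → ℝ) 1 ∩ {x | memX0 edge w x} := by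
          constructor
          · simp [hy, norm_smul, abs_of_pos (inv_pos.2 hnx), inv_mul_cancel₀ hnx.ne']
          · exact hX0scale _ _ hx
        have h1 : energyH edge hne w x0 ≤ energyH edge hne w y := hx0min hymem
        have h2 : energyH edge hne w x = ‖x‖ ^ 2 * energyH edge hne w y := by
          have : x = ‖x‖ • y := by
            rw [hy, smul_smul, mul_inv_cancel₀ hnx.ne', one_smul]
          conv_lhs => rw [this]
          exact aux_energy_smul (norm_nonneg x) y
        rw [h2]
        calc energyH edge hne w x0 * ‖x‖ ^ 2 ≤ energyH edge hne w y * ‖x‖ ^ 2 := by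
              nlinarith [sq_nonneg ‖x‖]
          _ = ‖x‖ ^ 2 * energyH edge hne w y := by ring
  · refine ⟨1, one_pos, fun x hx => ?_⟩
    rcases eq_or_ne x 0 with rfl | hxne
    · simpa using aux_energy_nonneg (hne := hne) hw 0
    · exfalso
      apply hS
      have hnx : (0:ℝ) < ‖x‖ := norm_pos_iff.2 hxne
      exact ⟨‖x‖⁻¹ • x, by
        simp [norm_smul, abs_of_pos (inv_pos.2 hnx), inv_mul_cancel₀ hnx.ne'],
        hX0scale _ _ hx⟩

lemma aux_inner_abs_le (s x : V → ℝ) : |∑ v, s v * x v| ≤ (∑ v, |s v|) * ‖x‖ := by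
  calc |∑ v, s v * x v| ≤ ∑ v, |s v * x v| := Finset.abs_sum_le_sum_abs _ _
    _ ≤ ∑ v, |s v| * ‖x‖ := by
        refine Finset.sum_le_sum fun v _ => ?_
        rw [abs_mul]
        exact mul_le_mul_of_nonneg_left (norm_le_pi_norm x v) (abs_nonneg _)
    _ = (∑ v, |s v|) * ‖x‖ := by rw [Finset.sum_mul]

lemma aux_X0_closed : IsClosed {x : V → ℝ | memX0 edge w x} := by
  have : {x : V → ℝ | memX0 edge w x} = (fun x : V → ℝ => ∑ v, degw edge w v * x v) ⁻¹' {0} := rfl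
  rw [this]
  exact IsClosed.preimage (continuous_finset_sum _ fun v _ =>
    continuous_const.mul (continuous_apply v)) isClosed_singleton

lemma aux_primal_min [Nonempty E] (hw : ∀ e, 0 < w e) (hconn : HConn edge) (s : V → ℝ) :
    ∃ xstar : V → ℝ, memX0 edge w xstar ∧
      ∀ x, memX0 edge w x → Pobj edge hne w s xstar ≤ Pobj edge hne w s x := by
  obtain ⟨m, hm, hcoer⟩ := aux_coercive (hne := hne) hw hconn
  set C : ℝ := ∑ v, |s v| with hC
  have hC0 : 0 ≤ C := Finset.sum_nonneg fun v _ => abs_nonneg _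
  set R : ℝ := (C + 1) / m with hR
  have hR0 : 0 ≤ R := by positivity
  have hP0 : Pobj edge hne w s 0 = 0 := by
    unfold Pobj energyH eRange
    simp
  have hfar : ∀ x, memX0 edge w x → R ≤ ‖x‖ → 0 ≤ Pobj edge hne w s x := by
    intro x hx hRx
    have h1 : m * ‖x‖ ^ 2 ≤ energyH edge hne w x := hcoer x hx
    have h2 : |∑ v, s v * x v| ≤ C * ‖x‖ := aux_inner_abs_le s x
    have h3 : C + 1 ≤ m * ‖x‖ := by
      rw [hR, div_le_iff₀ hm] at hRx; linarith [mul_comm m ‖x‖]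
    have h4 : (0:ℝ) ≤ ‖x‖ := norm_nonneg x
    unfold Pobj
    nlinarith [abs_nonneg (∑ v, s v * x v), le_abs_self (∑ v, s v * x v)]
  have hKc : IsCompact (Metric.closedBall (0 : V → ℝ) R ∩ {x | memX0 edge w x}) :=
    (isCompact_closedBall _ _).inter_right aux_X0_closed
  have hKne : (Metric.closedBall (0 : V → ℝ) R ∩ {x | memX0 edge w x}).Nonempty := by
    refine ⟨0, ?_, ?_⟩
    · simpa using hR0
    · unfold memX0; simp
  obtain ⟨xstar, hxsmem, hxsmin⟩ := hKc.exists_isMinOn hKne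
    (aux_Pobj_continuous (w := w) s).continuousOn
  refine ⟨xstar, hxsmem.2, fun x hx => ?_⟩
  rcases le_or_gt ‖x‖ R with h | h
  · exact hxsmin ⟨by simpa using h, hx⟩
  · have h0 : Pobj edge hne w s xstar ≤ 0 := by
      have := hxsmin ⟨by simpa using hR0, show memX0 edge w 0 by unfold memX0; simp⟩
      simp only [Set.mem_setOf_eq] at this
      rwa [hP0] at this
    exact h0.trans (hfar x hx h.le)

/-- Argmax set of `x` on edge `e`. -/
noncomputable def auxA (edge : E → Finset V) (hne : ∀ e, (edge e).Nonempty)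
    (xs : V → ℝ) (e : E) : Finset V :=
  (edge e).filter (fun u0 => xs u0 = (edge e).sup' (hne e) xs)

/-- Argmin set of `x` on edge `e`. -/
noncomputable def auxB (edge : E → Finset V) (hne : ∀ e, (edge e).Nonempty)
    (xs : V → ℝ) (e : E) : Finset V :=
  (edge e).filter (fun u0 => xs u0 = (edge e).inf' (hne e) xs)

/-- Generators of the per-edge dual cell. -/
noncomputable def auxG (edge : E → Finset V) (hne : ∀ e, (edge e).Nonempty)
    (w : E → ℝ) (xs : V → ℝ) (e : E) : Set (V → ℝ) :=
  (fun p : V × V => (w e * eRange edge hne xs e) • (Pi.single p.1 (1:ℝ) - Pi.single p.2 1)) ''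
    ↑(auxA edge hne xs e ×ˢ auxB edge hne xs e)

lemma auxA_nonempty (xs : V → ℝ) (e : E) : (auxA edge hne xs e).Nonempty := by
  obtain ⟨u0, hu0, h⟩ := Finset.exists_mem_eq_sup' (hne e) xs
  exact ⟨u0, Finset.mem_filter.2 ⟨hu0, h.symm⟩⟩

lemma auxB_nonempty (xs : V → ℝ) (e : E) : (auxB edge hne xs e).Nonempty := by
  obtain ⟨u0, hu0, h⟩ := Finset.exists_mem_eq_inf' (hne e) xs
  exact ⟨u0, Finset.mem_filter.2 ⟨hu0, h.symm⟩⟩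

lemma aux_sum_single_mul (a : V) (g : V → ℝ) :
    ∑ v, (Pi.single a 1 : V → ℝ) v * g v = g a := by
  simp [Pi.single_apply, ite_mul, Finset.sum_ite_eq]

lemma aux_hull_memUe (hw : ∀ e, 0 < w e) (xs : V → ℝ) (e : E) (ζ : V → ℝ)
    (hζ : ζ ∈ convexHull ℝ (auxG edge hne w xs e)) : memUe edge e ζ := by
  have hconv : Convex ℝ {ζ : V → ℝ | memUe edge e ζ} := by
    intro ζ1 h1 ζ2 h2 p q hp hq hpq
    constructor
    · intro v hv
      simp only [Pi.add_apply, Pi.smul_apply, smul_eq_mul, h1.1 v hv, h2.1 v hv,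
        mul_zero, add_zero]
    · simp only [Pi.add_apply, Pi.smul_apply, smul_eq_mul, Finset.sum_add_distrib,
        ← Finset.mul_sum, h1.2, h2.2, mul_zero, add_zero]
  refine convexHull_min ?_ hconv hζ
  rintro ζ0 ⟨⟨aa, bb⟩, hab, rfl⟩
  rw [Finset.mem_coe, Finset.mem_product] at hab
  have haE : aa ∈ edge e := (Finset.mem_filter.1 hab.1).1
  have hbE : bb ∈ edge e := (Finset.mem_filter.1 hab.2).1
  constructor
  · intro v hv
    have hva : v ≠ aa := fun h => hv (h ▸ haE)
    have hvb : v ≠ bb := fun h => hv (h ▸ hbE)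
    simp [Pi.single_eq_of_ne hva, Pi.single_eq_of_ne hvb]
  · simp only [Pi.smul_apply, Pi.sub_apply, smul_eq_mul, mul_sub, Finset.sum_sub_distrib,
      ← Finset.mul_sum]
    have h1 : ∑ v, (Pi.single aa 1 : V → ℝ) v = 1 := by simp [Pi.single_apply]
    have h2 : ∑ v, (Pi.single bb 1 : V → ℝ) v = 1 := by simp [Pi.single_apply]
    rw [h1, h2]; ring

lemma aux_hull_inner (hw : ∀ e, 0 < w e) (xs : V → ℝ) (e : E) (ζ : V → ℝ)
    (hζ : ζ ∈ convexHull ℝ (auxG edge hne w xs e)) :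
    ∑ v, ζ v * xs v = w e * eRange edge hne xs e * eRange edge hne xs e := by
  have hconv : Convex ℝ {ζ : V → ℝ |
      ∑ v, ζ v * xs v = w e * eRange edge hne xs e * eRange edge hne xs e} := by
    intro ζ1 h1 ζ2 h2 p q hp hq hpq
    simp only [Set.mem_setOf_eq] at h1 h2 ⊢
    have hx : ∑ v, (p • ζ1 + q • ζ2) v * xs v
        = p * ∑ v, ζ1 v * xs v + q * ∑ v, ζ2 v * xs v := by
      simp only [Pi.add_apply, Pi.smul_apply, smul_eq_mul, Finset.mul_sum,
        ← Finset.sum_add_distrib]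
      exact Finset.sum_congr rfl fun v _ => by ring
    rw [hx, h1, h2, ← add_mul, hpq, one_mul]
  refine convexHull_min ?_ hconv hζ
  rintro ζ0 ⟨⟨aa, bb⟩, hab, rfl⟩
  rw [Finset.mem_coe, Finset.mem_product] at hab
  have haM : xs aa = (edge e).sup' (hne e) xs := (Finset.mem_filter.1 hab.1).2
  have hbm : xs bb = (edge e).inf' (hne e) xs := (Finset.mem_filter.1 hab.2).2
  simp only [Set.mem_setOf_eq]
  have expand : ∀ v, ((w e * eRange edge hne xs e) •
        ((Pi.single aa 1 : V → ℝ) - (Pi.single bb 1 : V → ℝ))) v * xs v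
      = (w e * eRange edge hne xs e) * ((Pi.single aa 1 : V → ℝ) v * xs v)
        - (w e * eRange edge hne xs e) * ((Pi.single bb 1 : V → ℝ) v * xs v) := by
    intro v
    simp only [Pi.smul_apply, Pi.sub_apply, smul_eq_mul]
    ring
  simp only [expand, Finset.sum_sub_distrib, ← Finset.mul_sum, aux_sum_single_mul]
  rw [haM, hbm]
  unfold eRange
  ring

lemma aux_hull_l1 (hw : ∀ e, 0 < w e) (xs : V → ℝ) (e : E) (ζ : V → ℝ)
    (hζ : ζ ∈ convexHull ℝ (auxG edge hne w xs e)) :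
    l1norm ζ ≤ 2 * (w e * eRange edge hne xs e) := by
  have hwr : 0 ≤ w e * eRange edge hne xs e :=
    mul_nonneg (hw e).le (aux_eRange_nonneg (hne := hne) xs e)
  have hconv : Convex ℝ {ζ : V → ℝ | l1norm ζ ≤ 2 * (w e * eRange edge hne xs e)} := by
    intro ζ1 h1 ζ2 h2 p q hp hq hpq
    simp only [Set.mem_setOf_eq] at *
    calc l1norm (p • ζ1 + q • ζ2) ≤ p * l1norm ζ1 + q * l1norm ζ2 := by
          unfold l1norm
          simp only [Finset.mul_sum, ← Finset.sum_add_distrib]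
          refine Finset.sum_le_sum fun v _ => ?_
          simp only [Pi.add_apply, Pi.smul_apply, smul_eq_mul]
          calc |p * ζ1 v + q * ζ2 v| ≤ |p * ζ1 v| + |q * ζ2 v| := abs_add_le _ _
            _ = p * |ζ1 v| + q * |ζ2 v| := by
                rw [abs_mul, abs_mul, abs_of_nonneg hp, abs_of_nonneg hq]
      _ ≤ p * (2 * (w e * eRange edge hne xs e)) + q * (2 * (w e * eRange edge hne xs e)) := by
          have := mul_le_mul_of_nonneg_left h1 hp
          have := mul_le_mul_of_nonneg_left h2 hq
          linarith
      _ = 2 * (w e * eRange edge hne xs e) := by nlinarith [hpq]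
  refine convexHull_min ?_ hconv hζ
  rintro ζ0 ⟨⟨aa, bb⟩, hab, rfl⟩
  simp only [Set.mem_setOf_eq]
  unfold l1norm
  calc ∑ v, |((w e * eRange edge hne xs e) • ((Pi.single aa 1 : V → ℝ) - (Pi.single bb 1 : V → ℝ))) v|
      = ∑ v, (w e * eRange edge hne xs e) * |(Pi.single aa 1 : V → ℝ) v - (Pi.single bb 1 : V → ℝ) v| := by
        refine Finset.sum_congr rfl fun v _ => ?_
        simp only [Pi.smul_apply, Pi.sub_apply, smul_eq_mul]
        rw [abs_mul, abs_of_nonneg hwr]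
    _ ≤ ∑ v, (w e * eRange edge hne xs e) * ((Pi.single aa 1 : V → ℝ) v + (Pi.single bb 1 : V → ℝ) v) := by
        refine Finset.sum_le_sum fun v _ => ?_
        refine mul_le_mul_of_nonneg_left ?_ hwr
        have h1 : (0:ℝ) ≤ (Pi.single aa 1 : V → ℝ) v := by
          rcases eq_or_ne v aa with rfl | h; · simp
          · simp [Pi.single_eq_of_ne h]
        have h2 : (0:ℝ) ≤ (Pi.single bb 1 : V → ℝ) v := by
          rcases eq_or_ne v bb with rfl | h; · simp
          · simp [Pi.single_eq_of_ne h]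
        calc |(Pi.single aa 1 : V → ℝ) v - (Pi.single bb 1 : V → ℝ) v|
            ≤ |(Pi.single aa 1 : V → ℝ) v| + |(Pi.single bb 1 : V → ℝ) v| := abs_sub _ _
          _ = (Pi.single aa 1 : V → ℝ) v + (Pi.single bb 1 : V → ℝ) v := by
              rw [abs_of_nonneg h1, abs_of_nonneg h2]
    _ = 2 * (w e * eRange edge hne xs e) := by
        rw [← Finset.mul_sum]
        have h1 : ∑ v, ((Pi.single aa 1 : V → ℝ) v + (Pi.single bb 1 : V → ℝ) v) = 2 := by
          simp [Finset.sum_add_distrib, Pi.single_apply]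
          norm_num
        rw [h1]; ring

set_option maxHeartbeats 2000000 in
lemma aux_sep [Nonempty E] (hw : ∀ e, 0 < w e) (s : V → ℝ) (hs : ∑ v, s v = 0)
    (xs : V → ℝ) (hxs : memX0 edge w xs)
    (hmin : ∀ x, memX0 edge w x → Pobj edge hne w s xs ≤ Pobj edge hne w s x) :
    ∃ ηstar : E → V → ℝ, (∀ e, ηstar e ∈ convexHull ℝ (auxG edge hne w xs e)) ∧
      Bmap ηstar = s := by
  classical
  set K : Set (E → V → ℝ) := Set.univ.pi fun e => convexHull ℝ (auxG edge hne w xs e) with hK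
  have hGfin : ∀ e, (auxG edge hne w xs e).Finite :=
    fun e => Set.Finite.image _ (Finset.finite_toSet _)
  have hKcomp : IsCompact K :=
    isCompact_univ_pi fun e => (hGfin e).isCompact_convexHull ℝ
  have hKconv : Convex ℝ K := convex_pi fun e _ => convex_convexHull ℝ _
  let Blin : (E → V → ℝ) →ₗ[ℝ] (V → ℝ) :=
    { toFun := Bmap
      map_add' := by
        intro a b; funext v; simp [Bmap, Finset.sum_add_distrib]
      map_smul' := by
        intro c a; funext v; simp [Bmap, Finset.mul_sum] }
  have hCCconv : Convex ℝ (Bmap '' K) := hKconv.linear_image Blin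
  have hBcont : Continuous (Bmap : (E → V → ℝ) → V → ℝ) :=
    continuous_pi fun v => continuous_finset_sum _ fun e _ =>
      (continuous_apply v).comp (continuous_apply e)
  have hCCclosed : IsClosed (Bmap '' K) := (hKcomp.image hBcont).isClosed
  suffices hmem : s ∈ Bmap '' K by
    obtain ⟨η, hηK, hBη⟩ := hmem
    exact ⟨η, fun e => hηK e (Set.mem_univ e), hBη⟩
  by_contra hsC
  obtain ⟨f, u, hfu, hus⟩ := geometric_hahn_banach_closed_point hCCconv hCCclosed hsC
  set y0 : V → ℝ := fun v => f (Pi.single v 1) with hy0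
  have hrepr : ∀ z : V → ℝ, f z = ∑ v, z v * y0 v := by
    intro z
    have hz : z = ∑ v, z v • (Pi.single v 1 : V → ℝ) := by
      funext v'
      simp only [Finset.sum_apply, Pi.smul_apply, smul_eq_mul, Pi.single_apply]
      simp
    conv_lhs => rw [hz]
    rw [map_sum]
    simp [hy0]
  set T : ℝ := ∑ v, degw edge w v with hT
  have hTpos : 0 < T := aux_total_deg_pos hne hw
  set c0 : ℝ := (∑ v, degw edge w v * y0 v) / T with hc0
  set y : V → ℝ := fun v => y0 v - c0 with hy
  have hyX0 : memX0 edge w y := by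
    unfold memX0
    have h1 : ∑ v, degw edge w v * y v
        = (∑ v, degw edge w v * y0 v) - (∑ v, degw edge w v) * c0 := by
      rw [Finset.sum_mul, ← Finset.sum_sub_distrib]
      exact Finset.sum_congr rfl fun v _ => by rw [hy]; ring
    rw [h1, ← hT, hc0]
    field_simp
    ring
  have hae : ∀ e, ∃ aa ∈ auxA edge hne xs e, ∀ u0 ∈ auxA edge hne xs e, y u0 ≤ y aa :=
    fun e => Finset.exists_max_image _ y (auxA_nonempty xs e)
  choose a ha hamax using hae
  have hbe : ∀ e, ∃ bb ∈ auxB edge hne xs e, ∀ u0 ∈ auxB edge hne xs e, y bb ≤ y u0 :=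
    fun e => Finset.exists_min_image _ y (auxB_nonempty xs e)
  choose b hb hbmin using hbe
  set zed : E → V → ℝ := fun e => (w e * eRange edge hne xs e) •
    ((Pi.single (a e) 1 : V → ℝ) - (Pi.single (b e) 1 : V → ℝ)) with hzed
  have hzK : zed ∈ K := by
    rw [hK]
    intro e _
    refine subset_convexHull ℝ _ ?_
    exact ⟨(a e, b e), by
      rw [Finset.mem_coe, Finset.mem_product]; exact ⟨ha e, hb e⟩, rfl⟩
  have hglt : f (Bmap zed) < u := hfu _ ⟨zed, hzK, rfl⟩
  have hfB : f (Bmap zed)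
      = ∑ e, w e * eRange edge hne xs e * (y (a e) - y (b e)) := by
    rw [hrepr]
    have h1 : ∑ v, Bmap zed v * y0 v = ∑ e, ∑ v, zed e v * y0 v := by
      simp only [Bmap, Finset.sum_mul]
      rw [Finset.sum_comm]
    rw [h1]
    refine Finset.sum_congr rfl fun e _ => ?_
    have expand : ∀ v, zed e v * y0 v
        = (w e * eRange edge hne xs e) * ((Pi.single (a e) 1 : V → ℝ) v * y0 v)
          - (w e * eRange edge hne xs e) * ((Pi.single (b e) 1 : V → ℝ) v * y0 v) := by
      intro v
      rw [hzed]
      simp only [Pi.smul_apply, Pi.sub_apply, smul_eq_mul]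
      ring
    simp only [expand, Finset.sum_sub_distrib, ← Finset.mul_sum, aux_sum_single_mul]
    rw [hy]
    ring
  have hsy : u < ∑ v, s v * y v := by
    have h2 : ∑ v, s v * y v = ∑ v, s v * y0 v := by
      rw [← sub_eq_zero, ← Finset.sum_sub_distrib]
      have : ∀ v, s v * y v - s v * y0 v = -c0 * s v := fun v => by rw [hy]; ring
      simp only [this, ← Finset.mul_sum, hs, mul_zero]
    rw [h2, ← hrepr s]
    exact hus
  -- gap constant
  set gapS : Finset ℝ := Finset.univ.biUnion (fun e =>
    ((edge e \ auxA edge hne xs e).image fun u0 => (edge e).sup' (hne e) xs - xs u0) ∪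
    ((edge e \ auxB edge hne xs e).image fun u0 => xs u0 - (edge e).inf' (hne e) xs)) with hgapS
  set γ : ℝ := if h : gapS.Nonempty then gapS.min' h else 1 with hγ
  have hgap_pos : ∀ z ∈ gapS, 0 < z := by
    intro z hz
    rw [hgapS] at hz
    simp only [Finset.mem_biUnion, Finset.mem_union, Finset.mem_image, Finset.mem_sdiff] at hz
    obtain ⟨e, -, hz⟩ := hz
    rcases hz with ⟨u0, ⟨hu0e, hu0A⟩, heq⟩ | ⟨u0, ⟨hu0e, hu0B⟩, heq⟩
    · have h1 : xs u0 ≤ (edge e).sup' (hne e) xs := Finset.le_sup' xs hu0e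
      have h2 : xs u0 ≠ (edge e).sup' (hne e) xs :=
        fun hh => hu0A (Finset.mem_filter.2 ⟨hu0e, hh⟩)
      rw [← heq]
      exact sub_pos.2 (lt_of_le_of_ne h1 h2)
    · have h1 : (edge e).inf' (hne e) xs ≤ xs u0 := Finset.inf'_le xs hu0e
      have h2 : xs u0 ≠ (edge e).inf' (hne e) xs :=
        fun hh => hu0B (Finset.mem_filter.2 ⟨hu0e, hh⟩)
      rw [← heq]
      exact sub_pos.2 (lt_of_le_of_ne h1 (Ne.symm h2))
  have hγpos : 0 < γ := by
    rw [hγ]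
    split_ifs with h
    · exact hgap_pos _ (gapS.min'_mem h)
    · exact one_pos
  have hγle : ∀ z ∈ gapS, γ ≤ z := by
    intro z hz
    rw [hγ, dif_pos ⟨z, hz⟩]
    exact Finset.min'_le _ _ hz
  have hγle1 : ∀ e, ∀ u0 ∈ edge e, u0 ∉ auxA edge hne xs e →
      γ ≤ (edge e).sup' (hne e) xs - xs u0 := by
    intro e u0 h1 h2
    refine hγle _ ?_
    rw [hgapS]
    exact Finset.mem_biUnion.2 ⟨e, Finset.mem_univ e, Finset.mem_union_left _
      (Finset.mem_image.2 ⟨u0, Finset.mem_sdiff.2 ⟨h1, h2⟩, rfl⟩)⟩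
  have hγle2 : ∀ e, ∀ u0 ∈ edge e, u0 ∉ auxB edge hne xs e →
      γ ≤ xs u0 - (edge e).inf' (hne e) xs := by
    intro e u0 h1 h2
    refine hγle _ ?_
    rw [hgapS]
    exact Finset.mem_biUnion.2 ⟨e, Finset.mem_univ e, Finset.mem_union_right _
      (Finset.mem_image.2 ⟨u0, Finset.mem_sdiff.2 ⟨h1, h2⟩, rfl⟩)⟩
  set ny : ℝ := ‖y‖ with hny
  have hny0 : 0 ≤ ny := norm_nonneg y
  have habs : ∀ v, |y v| ≤ ny := by
    intro v
    have := norm_le_pi_norm y v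
    simpa using this
  set Q : ℝ := ∑ e, w e / 2 * (y (a e) - y (b e)) ^ 2 with hQ
  have hQ0 : 0 ≤ Q :=
    Finset.sum_nonneg fun e _ => mul_nonneg (by linarith [(hw e).le]) (sq_nonneg _)
  set G : ℝ := ∑ e, w e * eRange edge hne xs e * (y (a e) - y (b e)) with hG
  set εg : ℝ := (∑ v, s v * y v) - G with hεg
  have hεgpos : 0 < εg := by
    rw [hεg]
    have : G < u := hfB ▸ hglt
    linarith
  set t : ℝ := min (γ / (2 * (ny + 1))) (εg / (2 * (Q + 1))) with htdef
  have ht0 : 0 < t := lt_min (by positivity) (by positivity)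
  have htny : t * ny ≤ γ / 2 := by
    have h1 : t ≤ γ / (2 * (ny + 1)) := min_le_left _ _
    rw [le_div_iff₀ (by positivity : (0:ℝ) < 2 * (ny + 1))] at h1
    nlinarith
  have htQ : t * Q < εg := by
    have h2 : t ≤ εg / (2 * (Q + 1)) := min_le_right _ _
    rw [le_div_iff₀ (by positivity : (0:ℝ) < 2 * (Q + 1))] at h2
    nlinarith
  -- per-edge range estimate
  have hsup : ∀ e, (edge e).sup' (hne e) (xs + t • y)
      ≤ (edge e).sup' (hne e) xs + t * y (a e) := by
    intro e
    refine Finset.sup'_le _ _ fun u0 hu0 => ?_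
    have h3 : -(t * ny) ≤ t * y (a e) := by
      have := habs (a e)
      nlinarith [abs_le.1 (habs (a e))]
    show xs u0 + t * y u0 ≤ _
    by_cases hA : u0 ∈ auxA edge hne xs e
    · have h1 : xs u0 = (edge e).sup' (hne e) xs := (Finset.mem_filter.1 hA).2
      have h2 : y u0 ≤ y (a e) := hamax e u0 hA
      nlinarith
    · have h1 : γ ≤ (edge e).sup' (hne e) xs - xs u0 := hγle1 e u0 hu0 hA
      have h2 : t * y u0 ≤ t * ny := by
        nlinarith [abs_le.1 (habs u0)]
      linarith
  have hinf : ∀ e, (edge e).inf' (hne e) xs + t * y (b e)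
      ≤ (edge e).inf' (hne e) (xs + t • y) := by
    intro e
    refine Finset.le_inf' _ _ fun u0 hu0 => ?_
    have h3 : t * y (b e) ≤ t * ny := by
      nlinarith [abs_le.1 (habs (b e))]
    show _ ≤ xs u0 + t * y u0
    by_cases hB : u0 ∈ auxB edge hne xs e
    · have h1 : xs u0 = (edge e).inf' (hne e) xs := (Finset.mem_filter.1 hB).2
      have h2 : y (b e) ≤ y u0 := hbmin e u0 hB
      nlinarith
    · have h1 : γ ≤ xs u0 - (edge e).inf' (hne e) xs := hγle2 e u0 hu0 hB
      have h2 : -(t * ny) ≤ t * y u0 := by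
        nlinarith [abs_le.1 (habs u0)]
      linarith
  have hrange : ∀ e, eRange edge hne (xs + t • y) e
      ≤ eRange edge hne xs e + t * (y (a e) - y (b e)) := by
    intro e
    have h1 := hsup e
    have h2 := hinf e
    unfold eRange
    linarith
  -- energy estimate
  have henergy : energyH edge hne w (xs + t • y)
      ≤ energyH edge hne w xs + t * G + t ^ 2 * Q := by
    have key : energyH edge hne w xs + t * G + t ^ 2 * Q
        = (1/2) * ∑ e, w e * (eRange edge hne xs e + t * (y (a e) - y (b e))) ^ 2 := by
      unfold energyH
      rw [hG, hQ, Finset.mul_sum, Finset.mul_sum, Finset.mul_sum, Finset.mul_sum,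
        ← Finset.sum_add_distrib, ← Finset.sum_add_distrib]
      exact Finset.sum_congr rfl fun e _ => by ring
    rw [key]
    unfold energyH
    have h12 : (0:ℝ) ≤ 1/2 := by norm_num
    refine mul_le_mul_of_nonneg_left (Finset.sum_le_sum fun e _ => ?_) h12
    refine mul_le_mul_of_nonneg_left ?_ (hw e).le
    have h1 : 0 ≤ eRange edge hne (xs + t • y) e := aux_eRange_nonneg _ _
    have h2 := hrange e
    nlinarith
  -- contradiction
  have hXty : memX0 edge w (xs + t • y) := by
    unfold memX0 at *
    have h1 : ∑ v, degw edge w v * (xs + t • y) v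
        = ∑ v, degw edge w v * xs v + t * ∑ v, degw edge w v * y v := by
      rw [Finset.mul_sum, ← Finset.sum_add_distrib]
      refine Finset.sum_congr rfl fun v _ => ?_
      simp only [Pi.add_apply, Pi.smul_apply, smul_eq_mul]
      ring
    rw [h1, hxs, hyX0]
    ring
  have hsplit : ∑ v, s v * (xs + t • y) v = ∑ v, s v * xs v + t * ∑ v, s v * y v := by
    rw [Finset.mul_sum, ← Finset.sum_add_distrib]
    refine Finset.sum_congr rfl fun v _ => ?_
    simp only [Pi.add_apply, Pi.smul_apply, smul_eq_mul]
    ring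
  have hPlt : Pobj edge hne w s (xs + t • y) < Pobj edge hne w s xs := by
    unfold Pobj
    rw [hsplit]
    have h1 : (∑ v, s v * y v) = G + εg := by rw [hεg]; ring
    have h2 : t ^ 2 * Q = t * (t * Q) := by ring
    have h3 : t * (t * Q) < t * εg := by
      exact mul_lt_mul_of_pos_left htQ ht0
    calc energyH edge hne w (xs + t • y) - (∑ v, s v * xs v + t * ∑ v, s v * y v)
        ≤ energyH edge hne w xs + t * G + t ^ 2 * Q
          - (∑ v, s v * xs v + t * ∑ v, s v * y v) := by linarith [henergy]
      _ < energyH edge hne w xs - ∑ v, s v * xs v := by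
          rw [h1, h2]
          nlinarith
  exact absurd (hmin _ hXty) (not_le.2 hPlt)

lemma aux_l1_nonneg (η : V → ℝ) : 0 ≤ l1norm η :=
  Finset.sum_nonneg fun v _ => abs_nonneg _

theorem stmt3' (edge : E → Finset V) (hne : ∀ e, (edge e).Nonempty)
    (w : E → ℝ) (hw : ∀ e, 0 < w e) (s : V → ℝ)
    (hconn : HConn edge) (hs : ∑ v, s v = 0) :
    ∃ xstar : V → ℝ, ∃ ηstar : E → V → ℝ,
      memX0 edge w xstar ∧
      memY edge ηstar ∧ Bmap ηstar = s ∧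
      (∀ x, memX0 edge w x → Pobj edge hne w s xstar ≤ Pobj edge hne w s x) ∧
      (∀ η, memY edge η → Bmap η = s → Dobj w ηstar ≤ Dobj w η) ∧
      Pobj edge hne w s xstar = - Dobj w ηstar := by
  by_cases hE : Nonempty E
  case neg =>
    haveI : IsEmpty E := not_nonempty_iff.mp hE
    have hVsub : ∀ u v : V, u = v := by
      intro u v
      obtain ⟨k, p, c, hp0, hpl, -⟩ := hconn u v
      cases k with
      | zero => rw [← hp0, ← hpl]; rfl
      | succ n => exact (IsEmpty.false (c 0)).elim
    have hs0 : ∀ v, s v = 0 := by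
      intro v
      have huniv : (Finset.univ : Finset V) = {v} :=
        Finset.eq_singleton_iff_unique_mem.2 ⟨Finset.mem_univ v, fun u _ => hVsub u v⟩
      rw [huniv, Finset.sum_singleton] at hs
      exact hs
    have hPzero : ∀ x, Pobj edge hne w s x = 0 := by
      intro x
      unfold Pobj energyH
      simp [Finset.univ_eq_empty, hs0]
    have hDzero : ∀ η : E → V → ℝ, Dobj w η = 0 := by
      intro η
      unfold Dobj
      simp [Finset.univ_eq_empty]
    refine ⟨0, fun _ => 0, ?_, ?_, ?_, ?_, ?_, ?_⟩
    · unfold memX0; simp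
    · intro e; exact (IsEmpty.false e).elim
    · funext v; simp [Bmap, Finset.univ_eq_empty, hs0 v]
    · intro x _; rw [hPzero, hPzero]
    · intro η _ _; rw [hDzero, hDzero]
    · rw [hPzero, hDzero]; ring
  case pos =>
    obtain ⟨xs, hxs, hmin⟩ := aux_primal_min (hne := hne) hw hconn s
    obtain ⟨ηstar, hηhull, hBη⟩ := aux_sep hw s hs xs hxs hmin
    have hmemY : memY edge ηstar := fun e => aux_hull_memUe hw xs e _ (hηhull e)
    have hinner : ∀ e, ∑ v, ηstar e v * xs v
        = w e * eRange edge hne xs e * eRange edge hne xs e :=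
      fun e => aux_hull_inner hw xs e _ (hηhull e)
    have hl1 : ∀ e, l1norm (ηstar e) ≤ 2 * (w e * eRange edge hne xs e) :=
      fun e => aux_hull_l1 hw xs e _ (hηhull e)
    have hsx : ∑ v, s v * xs v = 2 * energyH edge hne w xs := by
      rw [← hBη]
      simp only [Bmap, Finset.sum_mul]
      rw [Finset.sum_comm]
      calc ∑ e, ∑ v, ηstar e v * xs v
          = ∑ e, w e * eRange edge hne xs e * eRange edge hne xs e :=
            Finset.sum_congr rfl fun e _ => hinner e
        _ = 2 * energyH edge hne w xs := by
            unfold energyH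
            rw [← mul_assoc]
            norm_num
            exact Finset.sum_congr rfl fun e _ => by ring
    have hDle : Dobj w ηstar ≤ energyH edge hne w xs := by
      unfold Dobj
      calc ∑ e, l1norm (ηstar e) ^ 2 / (8 * w e)
          ≤ ∑ e, (2 * (w e * eRange edge hne xs e)) ^ 2 / (8 * w e) := by
            refine Finset.sum_le_sum fun e _ => ?_
            have h8 : (0:ℝ) < 8 * w e := by linarith [hw e]
            have hnum : l1norm (ηstar e) ^ 2 ≤ (2 * (w e * eRange edge hne xs e)) ^ 2 :=
              pow_le_pow_left₀ (aux_l1_nonneg _) (hl1 e) 2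
            exact (div_le_div_iff_of_pos_right h8).2 hnum
        _ = energyH edge hne w xs := by
            unfold energyH
            rw [Finset.mul_sum]
            refine Finset.sum_congr rfl fun e _ => ?_
            have := (hw e).ne'
            field_simp
            ring
    have hPxs : Pobj edge hne w s xs = - energyH edge hne w xs := by
      unfold Pobj
      rw [hsx]
      ring
    have hweak : - Dobj w ηstar ≤ Pobj edge hne w s xs :=
      aux_weak (hne := hne) hw s xs ηstar hmemY hBη
    have hDE : Dobj w ηstar = energyH edge hne w xs := by
      refine le_antisymm hDle ?_
      rw [hPxs] at hweak
      linarith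
    refine ⟨xs, ηstar, hxs, hmemY, hBη, hmin, ?_, ?_⟩
    · intro η hη hB
      have := aux_weak (hne := hne) hw s xs η hη hB
      rw [hPxs] at this
      rw [hDE]
      linarith
    · rw [hPxs, hDE]

theorem stmt3 (edge : E → Finset V) (hne : ∀ e, (edge e).Nonempty)
    (w : E → ℝ) (hw : ∀ e, 0 < w e) (s : V → ℝ)
    (hconn : HConn edge) (hs : ∑ v, s v = 0) :
    ∃ xstar : V → ℝ, ∃ ηstar : E → V → ℝ,
      memX0 edge w xstar ∧
      memY edge ηstar ∧ Bmap ηstar = s ∧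
      (∀ x, memX0 edge w x → Pobj edge hne w s xstar ≤ Pobj edge hne w s x) ∧
      (∀ η, memY edge η → Bmap η = s → Dobj w ηstar ≤ Dobj w η) ∧
      Pobj edge hne w s xstar = - Dobj w ηstar :=
  stmt3' edge hne w hw s hconn hs

end
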